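/- Let p_n(x) = Σ_{k=0}^n c_k T_k( (2x − 1)/(1−2δ) ) be a degree-n polynomial written in the shifted Chebyshev basis (for δ ∈ (0,1/2)), and let A, B be symmetric d×d matrices with eigenvalues in [δ, 1−δ]. Then ‖p_n(A) − p_n(B)‖_F ≤ ( Σ_{k=0}^n |c_k| k² ) · (2/(1−2δ)) · ‖A − B‖_F. -/

import Mathlib

open Matrix Polynomial

/-- Frobenius norm of a real matrix. -/
noncomputable def frobNorm {m n : ℕ} (A : Matrix (Fin m) (Fin n) ℝ) : ℝ :=
  Real.sqrt (∑ i, ∑ j, (A i j) ^ 2)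

/-- `p_n(A) = Σ_{k=0}^n c_k T_k((2A − I)/(1−2δ))`, the shifted Chebyshev expansion
evaluated at a matrix. -/
noncomputable def chebExpansion {d : ℕ} (δ : ℝ) (n : ℕ) (c : ℕ → ℝ)
    (A : Matrix (Fin d) (Fin d) ℝ) : Matrix (Fin d) (Fin d) ℝ :=
  ∑ k ∈ Finset.range (n + 1),
    c k • Polynomial.aeval ((1 - 2 * δ)⁻¹ • (2 • A - 1)) (Polynomial.Chebyshev.T ℝ k)



lemma abs_sin_nat_mul_le (k : ℕ) (t : ℝ) : |Real.sin (k * t)| ≤ k * |Real.sin t| := by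
  induction k with
  | zero => simp
  | succ m ih =>
    have h : ((m : ℝ) + 1) * t = m * t + t := by ring
    rw [Nat.cast_succ, h, Real.sin_add]
    calc |Real.sin (m * t) * Real.cos t + Real.cos (m * t) * Real.sin t|
        ≤ |Real.sin (m * t) * Real.cos t| + |Real.cos (m * t) * Real.sin t| := abs_add_le _ _
      _ ≤ |Real.sin (m * t)| + |Real.sin t| := by
          rw [abs_mul, abs_mul]
          have h1 := Real.abs_cos_le_one t
          have h2 := Real.abs_cos_le_one (m * t)
          have := abs_nonneg (Real.sin (m * t))
          have := abs_nonneg (Real.sin t)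
          nlinarith
      _ ≤ (m : ℝ) * |Real.sin t| + |Real.sin t| := by linarith
      _ = ((m : ℝ) + 1) * |Real.sin t| := by ring

lemma cheb_lip (k : ℕ) {x y : ℝ} (hx : x ∈ Set.Icc (-1 : ℝ) 1) (hy : y ∈ Set.Icc (-1 : ℝ) 1) :
    |(Polynomial.Chebyshev.T ℝ k).eval x - (Polynomial.Chebyshev.T ℝ k).eval y| ≤
      (k : ℝ) ^ 2 * |x - y| := by
  set a := Real.arccos x with ha
  set b := Real.arccos y with hb
  have hxa : x = Real.cos a := (Real.cos_arccos hx.1 hx.2).symm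
  have hyb : y = Real.cos b := (Real.cos_arccos hy.1 hy.2).symm
  rw [hxa, hyb, Polynomial.Chebyshev.T_real_cos, Polynomial.Chebyshev.T_real_cos]
  push_cast
  rw [Real.cos_sub_cos, Real.cos_sub_cos]
  have h1 : ((k : ℝ) * a + k * b) / 2 = k * ((a + b) / 2) := by ring
  have h2 : ((k : ℝ) * a - k * b) / 2 = k * ((a - b) / 2) := by ring
  rw [h1, h2]
  rw [abs_mul, abs_mul, abs_mul, abs_mul]
  have e1 := abs_sin_nat_mul_le k ((a + b) / 2)
  have e2 := abs_sin_nat_mul_le k ((a - b) / 2)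
  have n1 := abs_nonneg (Real.sin ((a + b) / 2))
  have n2 := abs_nonneg (Real.sin ((a - b) / 2))
  have n3 := abs_nonneg (Real.sin ((k : ℝ) * ((a + b) / 2)))
  have n4 := abs_nonneg (Real.sin ((k : ℝ) * ((a - b) / 2)))
  have : |(-2 : ℝ)| = 2 := by norm_num
  rw [this]
  nlinarith [mul_le_mul e1 e2 n4 (by positivity : (0:ℝ) ≤ (k : ℝ) * |Real.sin ((a+b)/2)|)]



/-! ### frobNorm basics -/

lemma frobNorm_eq_norm {m n : ℕ} (A : Matrix (Fin m) (Fin n) ℝ) :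
    frobNorm A = ‖(WithLp.equiv 2 (Fin m × Fin n → ℝ)).symm (fun p => A p.1 p.2)‖ := by
  rw [EuclideanSpace.norm_eq, frobNorm]
  congr 1
  rw [Fintype.sum_prod_type]
  simp [Real.norm_eq_abs, sq_abs]

lemma frobNorm_zero {m n : ℕ} : frobNorm (0 : Matrix (Fin m) (Fin n) ℝ) = 0 := by
  simp [frobNorm]

lemma frobNorm_add_le {m n : ℕ} (A B : Matrix (Fin m) (Fin n) ℝ) :
    frobNorm (A + B) ≤ frobNorm A + frobNorm B := by
  rw [frobNorm_eq_norm, frobNorm_eq_norm, frobNorm_eq_norm]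
  have : (WithLp.equiv 2 (Fin m × Fin n → ℝ)).symm (fun p => (A + B) p.1 p.2)
      = (WithLp.equiv 2 (Fin m × Fin n → ℝ)).symm (fun p => A p.1 p.2)
        + (WithLp.equiv 2 (Fin m × Fin n → ℝ)).symm (fun p => B p.1 p.2) := by
    rfl
  rw [this]
  exact norm_add_le _ _

lemma frobNorm_smul {m n : ℕ} (c : ℝ) (A : Matrix (Fin m) (Fin n) ℝ) :
    frobNorm (c • A) = |c| * frobNorm A := by
  rw [frobNorm_eq_norm, frobNorm_eq_norm]
  have : (WithLp.equiv 2 (Fin m × Fin n → ℝ)).symm (fun p => (c • A) p.1 p.2)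
      = c • (WithLp.equiv 2 (Fin m × Fin n → ℝ)).symm (fun p => A p.1 p.2) := by
    rfl
  rw [this, norm_smul, Real.norm_eq_abs]

lemma frobNorm_sum_le {m n : ℕ} {ι : Type*} (s : Finset ι)
    (f : ι → Matrix (Fin m) (Fin n) ℝ) :
    frobNorm (∑ k ∈ s, f k) ≤ ∑ k ∈ s, frobNorm (f k) := by
  classical
  induction s using Finset.induction with
  | empty => simp [frobNorm_zero]
  | insert _ _ h ih =>
    rw [Finset.sum_insert h, Finset.sum_insert h]
    exact (frobNorm_add_le _ _).trans (by linarith)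

lemma frobNorm_le_of_abs_le {m n : ℕ} {X Y : Matrix (Fin m) (Fin n) ℝ} {L : ℝ} (hL : 0 ≤ L)
    (h : ∀ i j, |X i j| ≤ L * |Y i j|) : frobNorm X ≤ L * frobNorm Y := by
  have hsum : ∑ i, ∑ j, X i j ^ 2 ≤ L ^ 2 * ∑ i, ∑ j, Y i j ^ 2 := by
    rw [Finset.mul_sum]
    refine Finset.sum_le_sum fun i _ => ?_
    rw [Finset.mul_sum]
    refine Finset.sum_le_sum fun j _ => ?_
    calc X i j ^ 2 = |X i j| ^ 2 := (sq_abs _).symm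
      _ ≤ (L * |Y i j|) ^ 2 := by
          exact pow_le_pow_left₀ (abs_nonneg _) (h i j) 2
      _ = L ^ 2 * Y i j ^ 2 := by rw [mul_pow, sq_abs]
  calc frobNorm X ≤ Real.sqrt (L ^ 2 * ∑ i, ∑ j, Y i j ^ 2) := Real.sqrt_le_sqrt hsum
    _ = L * frobNorm Y := by
        rw [Real.sqrt_mul (sq_nonneg L), Real.sqrt_sq hL, frobNorm]

/-! ### sum of squares invariance -/

lemma sq_sum_eq_trace {d : ℕ} (N : Matrix (Fin d) (Fin d) ℝ) :
    ∑ i, ∑ j, (N i j) ^ 2 = Matrix.trace (Nᵀ * N) := by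
  rw [Matrix.trace]
  rw [Finset.sum_comm]
  refine Finset.sum_congr rfl fun j _ => ?_
  simp [Matrix.mul_apply, Matrix.diag, sq]

lemma sq_sum_conj {d : ℕ} (U V M : Matrix (Fin d) (Fin d) ℝ)
    (hU : U * Uᵀ = 1) (hV : V * Vᵀ = 1) :
    ∑ i, ∑ j, ((Uᵀ * M * V) i j) ^ 2 = ∑ i, ∑ j, (M i j) ^ 2 := by
  rw [sq_sum_eq_trace, sq_sum_eq_trace]
  have : (Uᵀ * M * V)ᵀ * (Uᵀ * M * V) = Vᵀ * (Mᵀ * (U * Uᵀ) * M) * V := by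
    simp only [Matrix.transpose_mul, Matrix.transpose_transpose, Matrix.mul_assoc]
  rw [this, hU, Matrix.mul_one]
  rw [Matrix.trace_mul_comm, ← Matrix.mul_assoc, ← Matrix.mul_assoc, hV, Matrix.one_mul]

lemma frobNorm_conj {d : ℕ} (U V M : Matrix (Fin d) (Fin d) ℝ)
    (hU : U * Uᵀ = 1) (hV : V * Vᵀ = 1) :
    frobNorm (Uᵀ * M * V) = frobNorm M := by
  rw [frobNorm, frobNorm, sq_sum_conj U V M hU hV]

/-! ### aeval lemmas -/

lemma matConjPow {d : ℕ} (U D : Matrix (Fin d) (Fin d) ℝ)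
    (h1 : U * Uᵀ = 1) (h2 : Uᵀ * U = 1) (k : ℕ) :
    (U * D * Uᵀ) ^ k = U * D ^ k * Uᵀ := by
  induction k with
  | zero => simp [h1]
  | succ k ih =>
    rw [pow_succ, pow_succ, ih]
    calc U * D ^ k * Uᵀ * (U * D * Uᵀ) = U * D ^ k * (Uᵀ * U) * (D * Uᵀ) := by
          simp only [Matrix.mul_assoc]
      _ = U * (D ^ k * D) * Uᵀ := by rw [h2, Matrix.mul_one]; simp only [Matrix.mul_assoc]

lemma aeval_conj {d : ℕ} (U D : Matrix (Fin d) (Fin d) ℝ)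
    (h1 : U * Uᵀ = 1) (h2 : Uᵀ * U = 1) (p : Polynomial ℝ) :
    Polynomial.aeval (U * D * Uᵀ) p = U * Polynomial.aeval D p * Uᵀ := by
  induction p using Polynomial.induction_on' with
  | add p q hp hq => rw [map_add, map_add, hp, hq, Matrix.mul_add, Matrix.add_mul]
  | monomial n a =>
    rw [aeval_monomial, aeval_monomial, matConjPow U D h1 h2]
    simp [Algebra.algebraMap_eq_smul_one, smul_mul_assoc, mul_smul_comm]

lemma aeval_diag {d : ℕ} (v : Fin d → ℝ) (p : Polynomial ℝ) :
    Polynomial.aeval (Matrix.diagonal v) p = Matrix.diagonal (fun i => p.eval (v i)) := by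
  induction p using Polynomial.induction_on' with
  | add p q hp hq =>
    rw [map_add, hp, hq, Matrix.diagonal_add]
    funext i
    simp [eval_add]
  | monomial n a =>
    rw [aeval_monomial, Matrix.diagonal_pow, Algebra.algebraMap_eq_smul_one, smul_mul_assoc,
      Matrix.one_mul]
    ext i j
    by_cases h : i = j <;> simp [Matrix.diagonal_apply, h, eval_monomial]

/-! ### conjugation structural lemmas -/

lemma conj_smul_diag {d : ℕ} (U : Matrix (Fin d) (Fin d) ℝ) (t : ℝ) (w : Fin d → ℝ) :
    t • (U * Matrix.diagonal w * Uᵀ) = U * Matrix.diagonal (fun i => t * w i) * Uᵀ := by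
  have hd : Matrix.diagonal (fun i => t * w i) = t • Matrix.diagonal w := by
    rw [← Matrix.diagonal_smul]
    rfl
  rw [hd, Matrix.mul_smul, smul_mul_assoc]

lemma conj_affine {d : ℕ} (U : Matrix (Fin d) (Fin d) ℝ) (hU1 : U * Uᵀ = 1)
    (t : ℝ) (v : Fin d → ℝ) :
    t • ((2 : ℕ) • (U * Matrix.diagonal v * Uᵀ) - 1) =
      U * Matrix.diagonal (fun i => t * (2 * v i - 1)) * Uᵀ := by
  have h1 : (1 : Matrix (Fin d) (Fin d) ℝ) = U * Matrix.diagonal (fun _ : Fin d => (1:ℝ)) * Uᵀ := by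
    rw [Matrix.diagonal_one, Matrix.mul_one, hU1]
  have e2 : (2:ℕ) • (U * Matrix.diagonal v * Uᵀ) =
      U * Matrix.diagonal (fun i => 2 * v i) * Uᵀ := by
    rw [two_smul, ← Matrix.add_mul, ← Matrix.mul_add, Matrix.diagonal_add,
      show (fun i => v i + v i) = (fun i => 2 * v i) from funext fun i => by ring]
  rw [e2, h1, ← Matrix.sub_mul, ← Matrix.mul_sub, Matrix.diagonal_sub, conj_smul_diag]

/-! ### core perturbation lemma -/

lemma key {d : ℕ} (p : Polynomial ℝ) (L : ℝ) (hL : 0 ≤ L)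
    (U V : Matrix (Fin d) (Fin d) ℝ)
    (hU1 : U * Uᵀ = 1) (hU2 : Uᵀ * U = 1) (hV1 : V * Vᵀ = 1) (hV2 : Vᵀ * V = 1)
    (lam mu : Fin d → ℝ)
    (hlip : ∀ i j, |p.eval (lam i) - p.eval (mu j)| ≤ L * |lam i - mu j|) :
    frobNorm (Polynomial.aeval (U * Matrix.diagonal lam * Uᵀ) p
        - Polynomial.aeval (V * Matrix.diagonal mu * Vᵀ) p) ≤
      L * frobNorm (U * Matrix.diagonal lam * Uᵀ - V * Matrix.diagonal mu * Vᵀ) := by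
  rw [aeval_conj U _ hU1 hU2, aeval_conj V _ hV1 hV2, aeval_diag, aeval_diag]
  have conj1 : ∀ D E : Fin d → ℝ,
      Uᵀ * (U * Matrix.diagonal D * Uᵀ - V * Matrix.diagonal E * Vᵀ) * V =
        Matrix.diagonal D * (Uᵀ * V) - (Uᵀ * V) * Matrix.diagonal E := by
    intro D E
    rw [Matrix.mul_sub, Matrix.sub_mul]
    congr 1
    · rw [show Uᵀ * (U * Matrix.diagonal D * Uᵀ) * V = Uᵀ * U * (Matrix.diagonal D * (Uᵀ * V)) by
        simp only [Matrix.mul_assoc], hU2, Matrix.one_mul]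
    · rw [show Uᵀ * (V * Matrix.diagonal E * Vᵀ) * V = Uᵀ * V * Matrix.diagonal E * (Vᵀ * V) by
        simp only [Matrix.mul_assoc], hV2, Matrix.mul_one]
  rw [← frobNorm_conj U V (U * Matrix.diagonal (fun i => p.eval (lam i)) * Uᵀ
        - V * Matrix.diagonal (fun i => p.eval (mu i)) * Vᵀ) hU1 hV1,
    ← frobNorm_conj U V (U * Matrix.diagonal lam * Uᵀ - V * Matrix.diagonal mu * Vᵀ) hU1 hV1,
    conj1, conj1]
  refine frobNorm_le_of_abs_le hL fun i j => ?_
  simp only [Matrix.sub_apply, Matrix.diagonal_mul, Matrix.mul_diagonal]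
  rw [show p.eval (lam i) * (Uᵀ * V) i j - (Uᵀ * V) i j * p.eval (mu j)
      = (p.eval (lam i) - p.eval (mu j)) * (Uᵀ * V) i j by ring,
    show lam i * (Uᵀ * V) i j - (Uᵀ * V) i j * mu j
      = (lam i - mu j) * (Uᵀ * V) i j by ring,
    abs_mul, abs_mul, ← mul_assoc]
  exact mul_le_mul_of_nonneg_right (hlip i j) (abs_nonneg _)

lemma shift_mem {δ l : ℝ} (hpos : 0 < 1 - 2 * δ) (hl : l ∈ Set.Icc δ (1 - δ)) :
    (1 - 2 * δ)⁻¹ * (2 * l - 1) ∈ Set.Icc (-1 : ℝ) 1 := by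
  obtain ⟨h1, h2⟩ := hl
  have hinv : 0 < (1 - 2 * δ)⁻¹ := inv_pos.mpr hpos
  have hc : (1 - 2 * δ)⁻¹ * (1 - 2 * δ) = 1 := inv_mul_cancel₀ (ne_of_gt hpos)
  constructor
  · nlinarith [mul_le_mul_of_nonneg_left (by linarith : -(1 - 2*δ) ≤ 2 * l - 1) hinv.le]
  · nlinarith [mul_le_mul_of_nonneg_left (by linarith : 2 * l - 1 ≤ 1 - 2*δ) hinv.le]


theorem chebExpansion_perturbation {d : ℕ} (δ : ℝ) (hδ : 0 < δ) (hδ' : δ < 1 / 2)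
    (n : ℕ) (c : ℕ → ℝ) (A B : Matrix (Fin d) (Fin d) ℝ)
    (hA : A.IsHermitian) (hB : B.IsHermitian)
    (hAeig : ∀ i, hA.eigenvalues i ∈ Set.Icc δ (1 - δ))
    (hBeig : ∀ i, hB.eigenvalues i ∈ Set.Icc δ (1 - δ)) :
    frobNorm (chebExpansion δ n c A - chebExpansion δ n c B) ≤
      (∑ k ∈ Finset.range (n + 1), |c k| * (k : ℝ) ^ 2) * (2 / (1 - 2 * δ)) *
        frobNorm (A - B) := by
  have hpos : (0:ℝ) < 1 - 2 * δ := by linarith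
  set U : Matrix (Fin d) (Fin d) ℝ := (hA.eigenvectorUnitary : Matrix (Fin d) (Fin d) ℝ) with hUdef
  set V : Matrix (Fin d) (Fin d) ℝ := (hB.eigenvectorUnitary : Matrix (Fin d) (Fin d) ℝ) with hVdef
  have hU1 : U * Uᵀ = 1 := by
    have := (Matrix.mem_unitaryGroup_iff).mp hA.eigenvectorUnitary.2
    rwa [Matrix.star_eq_conjTranspose, Matrix.conjTranspose_eq_transpose_of_trivial] at this
  have hU2 : Uᵀ * U = 1 := by
    have := (Matrix.mem_unitaryGroup_iff').mp hA.eigenvectorUnitary.2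
    rwa [Matrix.star_eq_conjTranspose, Matrix.conjTranspose_eq_transpose_of_trivial] at this
  have hV1 : V * Vᵀ = 1 := by
    have := (Matrix.mem_unitaryGroup_iff).mp hB.eigenvectorUnitary.2
    rwa [Matrix.star_eq_conjTranspose, Matrix.conjTranspose_eq_transpose_of_trivial] at this
  have hV2 : Vᵀ * V = 1 := by
    have := (Matrix.mem_unitaryGroup_iff').mp hB.eigenvectorUnitary.2
    rwa [Matrix.star_eq_conjTranspose, Matrix.conjTranspose_eq_transpose_of_trivial] at this
  have hAspec : A = U * Matrix.diagonal hA.eigenvalues * Uᵀ := by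
    have h := hA.spectral_theorem
    rwa [Unitary.conjStarAlgAut_apply, Matrix.star_eq_conjTranspose, Matrix.conjTranspose_eq_transpose_of_trivial,
      RCLike.ofReal_real_eq_id, Function.id_comp] at h
  have hBspec : B = V * Matrix.diagonal hB.eigenvalues * Vᵀ := by
    have h := hB.spectral_theorem
    rwa [Unitary.conjStarAlgAut_apply, Matrix.star_eq_conjTranspose, Matrix.conjTranspose_eq_transpose_of_trivial,
      RCLike.ofReal_real_eq_id, Function.id_comp] at h
  set lam : Fin d → ℝ := fun i => (1 - 2 * δ)⁻¹ * (2 * hA.eigenvalues i - 1) with hlam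
  set mu : Fin d → ℝ := fun i => (1 - 2 * δ)⁻¹ * (2 * hB.eigenvalues i - 1) with hmu
  have hAshift : (1 - 2 * δ)⁻¹ • ((2:ℕ) • A - 1) = U * Matrix.diagonal lam * Uᵀ := by
    rw [hAspec] ; exact conj_affine U hU1 _ _
  have hBshift : (1 - 2 * δ)⁻¹ • ((2:ℕ) • B - 1) = V * Matrix.diagonal mu * Vᵀ := by
    rw [hBspec] ; exact conj_affine V hV1 _ _
  -- difference of shifted matrices
  have hdiff : U * Matrix.diagonal lam * Uᵀ - V * Matrix.diagonal mu * Vᵀ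
      = (2 * (1 - 2 * δ)⁻¹) • (A - B) := by
    rw [← hAshift, ← hBshift, ← smul_sub]
    have : (2:ℕ) • A - 1 - ((2:ℕ) • B - 1) = (2:ℕ) • (A - B) := by
      rw [smul_sub]; abel
    rw [this, ← Nat.cast_smul_eq_nsmul ℝ 2 (A - B), smul_smul, mul_comm]
    norm_num
  have frob_diff : frobNorm (U * Matrix.diagonal lam * Uᵀ - V * Matrix.diagonal mu * Vᵀ)
      = (2 / (1 - 2 * δ)) * frobNorm (A - B) := by
    rw [hdiff, frobNorm_smul, abs_of_pos (by positivity), div_eq_mul_inv]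
  have hk : ∀ k ∈ Finset.range (n + 1),
      frobNorm (c k • Polynomial.aeval ((1 - 2 * δ)⁻¹ • (2 • A - 1)) (Polynomial.Chebyshev.T ℝ k)
        - c k • Polynomial.aeval ((1 - 2 * δ)⁻¹ • (2 • B - 1)) (Polynomial.Chebyshev.T ℝ k))
      ≤ |c k| * (k : ℝ) ^ 2 * (2 / (1 - 2 * δ) * frobNorm (A - B)) := by
    intro k _
    rw [← smul_sub, frobNorm_smul, hAshift, hBshift]
    have hbound := key (Polynomial.Chebyshev.T ℝ k) ((k : ℝ) ^ 2) (by positivity) U V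
      hU1 hU2 hV1 hV2 lam mu
      (fun i j => cheb_lip k (shift_mem hpos (hAeig i)) (shift_mem hpos (hBeig j)))
    rw [frob_diff] at hbound
    calc |c k| * frobNorm (Polynomial.aeval (U * Matrix.diagonal lam * Uᵀ)
            (Polynomial.Chebyshev.T ℝ k)
          - Polynomial.aeval (V * Matrix.diagonal mu * Vᵀ) (Polynomial.Chebyshev.T ℝ k))
        ≤ |c k| * ((k : ℝ) ^ 2 * (2 / (1 - 2 * δ) * frobNorm (A - B))) :=
          mul_le_mul_of_nonneg_left hbound (abs_nonneg _)
      _ = |c k| * (k : ℝ) ^ 2 * (2 / (1 - 2 * δ) * frobNorm (A - B)) := by ring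
  unfold chebExpansion
  rw [← Finset.sum_sub_distrib]
  refine (frobNorm_sum_le _ _).trans ?_
  calc ∑ k ∈ Finset.range (n + 1),
        frobNorm (c k • Polynomial.aeval ((1 - 2 * δ)⁻¹ • (2 • A - 1)) (Polynomial.Chebyshev.T ℝ k)
          - c k • Polynomial.aeval ((1 - 2 * δ)⁻¹ • (2 • B - 1)) (Polynomial.Chebyshev.T ℝ k))
      ≤ ∑ k ∈ Finset.range (n + 1),
          |c k| * (k : ℝ) ^ 2 * (2 / (1 - 2 * δ) * frobNorm (A - B)) := Finset.sum_le_sum hk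
    _ = (∑ k ∈ Finset.range (n + 1), |c k| * (k : ℝ) ^ 2) * (2 / (1 - 2 * δ)) *
          frobNorm (A - B) := by rw [← Finset.sum_mul, mul_assoc]
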